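/- Let Ω₁ ⊂ Ω₂ ⊂ ℤⁿ be finite subsets both containing the points p₁,…,p_M, and let u_{Ω₁}, u_{Ω₂} be the maximal solutions of the Dirichlet problem Δu = λe^u(e^u−1)^{2p+1} + h with zero boundary values on Ω₁ and Ω₂ respectively. Then u_{Ω₂} ≤ u_{Ω₁} on Ω̄₁ (the maximal solutions decrease as the domain grows). -/
import Mathlib


open Finset

noncomputable section

/-- Vertices of the lattice graph `ℤⁿ`. -/
abbrev LV (n : ℕ) := Fin n → ℤ

/-- The set of neighbors of a vertex `x` in the lattice graph `ℤⁿ`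
(the points differing from `x` by `±1` in exactly one coordinate). -/
def latNbrs {n : ℕ} (x : LV n) : Finset (LV n) :=
  Finset.image (fun p : Fin n × Bool =>
    Function.update x p.1 (x p.1 + (if p.2 then 1 else -1))) Finset.univ

/-- The graph Laplacian on `ℤⁿ`: `Δu(x) = Σ_{y∼x} (u(y) - u(x))`. -/
def latLap {n : ℕ} (u : LV n → ℝ) (x : LV n) : ℝ :=
  ∑ y ∈ latNbrs x, (u y - u x)

/-- The boundary `∂Ω = {y ∉ Ω : ∃ x ∈ Ω, y ∼ x}` of a finite set `Ω ⊂ ℤⁿ`. -/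
def latBdry {n : ℕ} (Ω : Finset (LV n)) : Finset (LV n) :=
  Ω.biUnion latNbrs \ Ω

/-- The closure `Ω̄ = Ω ∪ ∂Ω`. -/
def latClosure {n : ℕ} (Ω : Finset (LV n)) : Finset (LV n) :=
  Ω ∪ latBdry Ω

/-- The bilinear Dirichlet form
`E_Ω(u,v) = (1/2) Σ_{x,y ∈ Ω̄, x∼y} (u(y)-u(x))(v(y)-v(x))`. -/
def latEnergy {n : ℕ} (Ω : Finset (LV n)) (u v : LV n → ℝ) : ℝ :=
  (1 / 2) * ∑ x ∈ latClosure Ω, ∑ y ∈ latNbrs x ∩ latClosure Ω,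
    (u y - u x) * (v y - v x)

/-- The source term `h = 4π Σ_{j=1}^M n_j δ_{p_j}`. -/
def chernH {n M : ℕ} (nj : Fin M → ℕ) (pts : Fin M → LV n) (x : LV n) : ℝ :=
  4 * Real.pi * ∑ j, (nj j : ℝ) * (if x = pts j then 1 else 0)


lemma nbr_mem_closure {n : ℕ} {Ω : Finset (LV n)} {x y : LV n}
    (hx : x ∈ Ω) (hy : y ∈ latNbrs x) : y ∈ latClosure Ω := by
  by_cases h : y ∈ Ω
  · exact Finset.mem_union_left _ h
  · exact Finset.mem_union_right _ (Finset.mem_sdiff.mpr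
      ⟨Finset.mem_biUnion.mpr ⟨x, hx, hy⟩, h⟩)

lemma chernH_nonneg {n M : ℕ} (nj : Fin M → ℕ) (pts : Fin M → LV n) (x : LV n) :
    0 ≤ chernH nj pts x := by
  unfold chernH
  have : (0:ℝ) ≤ ∑ j, (nj j : ℝ) * (if x = pts j then 1 else 0) := by
    apply Finset.sum_nonneg
    intro j _
    positivity
  positivity

/-- Maximum principle: a solution with zero boundary values is nonpositive. -/
lemma sol_nonpos {n : ℕ} (lam : ℝ) (hlam : 0 < lam) (p M : ℕ)
    (nj : Fin M → ℕ) (pts : Fin M → LV n) (Ω : Finset (LV n)) (u : LV n → ℝ)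
    (hsol : ∀ x ∈ Ω, latLap u x
        = lam * Real.exp (u x) * (Real.exp (u x) - 1) ^ (2 * p + 1) + chernH nj pts x)
    (hbd : ∀ x ∈ latBdry Ω, u x = 0) :
    ∀ x ∈ latClosure Ω, u x ≤ 0 := by
  by_contra hcon
  push_neg at hcon
  obtain ⟨z, hz, hzpos⟩ := hcon
  obtain ⟨x₀, hx₀, hmax⟩ := Finset.exists_max_image (latClosure Ω) u ⟨z, hz⟩
  have hx₀pos : 0 < u x₀ := lt_of_lt_of_le hzpos (hmax z hz)
  have hx₀Ω : x₀ ∈ Ω := by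
    rcases Finset.mem_union.mp hx₀ with h | h
    · exact h
    · exact absurd (hbd x₀ h) (by linarith)
  have hlap : latLap u x₀ ≤ 0 := by
    unfold latLap
    apply Finset.sum_nonpos
    intro y hy
    have : u y ≤ u x₀ := hmax y (nbr_mem_closure hx₀Ω hy)
    linarith
  have heq := hsol x₀ hx₀Ω
  have h1 : 0 < lam * Real.exp (u x₀) * (Real.exp (u x₀) - 1) ^ (2 * p + 1) := by
    have : (0:ℝ) < Real.exp (u x₀) - 1 := by
      have h := Real.add_one_le_exp (u x₀)
      linarith
    positivity
  have h2 := chernH_nonneg nj pts x₀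
  linarith

/-- Domain monotonicity of the maximal solutions: if `Ω₁ ⊆ Ω₂` are finite subsets of `ℤⁿ`
containing the points `p_j`, and `u₁`, `u₂` are the maximal solutions of the Dirichlet
problem `Δu = λe^u(e^u-1)^{2p+1} + h` with zero boundary values on `Ω₁` and `Ω₂`
respectively, then `u₂ ≤ u₁` on `Ω̄₁`. -/
theorem maximal_solution_monotone (n : ℕ) (hn : 2 ≤ n) (lam : ℝ) (hlam : 0 < lam) (p : ℕ)
    (M : ℕ) (nj : Fin M → ℕ) (hnj : ∀ j, 0 < nj j) (pts : Fin M → LV n)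
    (Ω₁ Ω₂ : Finset (LV n)) (hΩ : Ω₁ ⊆ Ω₂)
    (hpts₁ : ∀ j, pts j ∈ Ω₁) (hpts₂ : ∀ j, pts j ∈ Ω₂)
    (u₁ u₂ : LV n → ℝ)
    (hsol₁ : ∀ x ∈ Ω₁, latLap u₁ x
        = lam * Real.exp (u₁ x) * (Real.exp (u₁ x) - 1) ^ (2 * p + 1) + chernH nj pts x)
    (hbd₁ : ∀ x ∈ latBdry Ω₁, u₁ x = 0)
    (hmax₁ : ∀ U : LV n → ℝ,
      (∀ x ∈ Ω₁, lam * Real.exp (U x) * (Real.exp (U x) - 1) ^ (2 * p + 1) + chernH nj pts x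
          ≤ latLap U x) →
      (∀ x ∈ latBdry Ω₁, U x ≤ 0) →
      ∀ x ∈ latClosure Ω₁, U x ≤ u₁ x)
    (hsol₂ : ∀ x ∈ Ω₂, latLap u₂ x
        = lam * Real.exp (u₂ x) * (Real.exp (u₂ x) - 1) ^ (2 * p + 1) + chernH nj pts x)
    (hbd₂ : ∀ x ∈ latBdry Ω₂, u₂ x = 0)
    (hmax₂ : ∀ U : LV n → ℝ,
      (∀ x ∈ Ω₂, lam * Real.exp (U x) * (Real.exp (U x) - 1) ^ (2 * p + 1) + chernH nj pts x
          ≤ latLap U x) →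
      (∀ x ∈ latBdry Ω₂, U x ≤ 0) →
      ∀ x ∈ latClosure Ω₂, U x ≤ u₂ x) :
    ∀ x ∈ latClosure Ω₁, u₂ x ≤ u₁ x := by
  -- u₂ is nonpositive on the closure of Ω₂
  have hneg : ∀ x ∈ latClosure Ω₂, u₂ x ≤ 0 :=
    sol_nonpos lam hlam p M nj pts Ω₂ u₂ hsol₂ hbd₂
  apply hmax₁ u₂
  · intro x hx
    exact le_of_eq (hsol₂ x (hΩ hx)).symm
  · intro x hx
    apply hneg
    obtain ⟨hx1, hx2⟩ := Finset.mem_sdiff.mp hx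
    obtain ⟨z, hz, hzn⟩ := Finset.mem_biUnion.mp hx1
    exact nbr_mem_closure (hΩ hz) hzn
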